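/- Fix an integer k ≥ 2 and p ∈ (0, 1/2]. The output distribution of the per-coordinate planting process with parameters k and p is exchangeable: for every permutation π of {1,…,k} and every x ∈ {0,1}^k, the probability of the output being x equals the probability of the output being (x_{π(1)},…,x_{π(k)}), despite the process only ever modifying the last bit. -/

import Mathlib

open Finset

/-- The weight of a `p`-biased bit: `1` has probability `p`, `0` has probability `1 - p`. -/
noncomputable def bern (p : ℝ) (b : Bool) : ℝ := if b then p else 1 - p

/-- The number of ones in a bit string. -/
def ones {k : ℕ} (x : Fin k → Bool) : ℕ := (Finset.univ.filter fun i => x i = true).card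

/-- Flipping the last bit of a bit string. -/
def flipLast {k : ℕ} (x : Fin k → Bool) : Fin k → Bool :=
  fun i => if (i : ℕ) = k - 1 then !(x i) else x i

/-- The transition kernel of the per-coordinate planting process: given the sampled string
`x` with `m` ones, if `k - m` is even the last bit is flipped with probability
`(p/(1-p))^(k-m)`; otherwise `x` is kept. `plantTrans k p x y` is the probability of
outputting `y` given that `x` was sampled. -/
noncomputable def plantTrans (k : ℕ) (p : ℝ) (x y : Fin k → Bool) : ℝ :=
  if Even (k - ones x) then
    (if y = flipLast x then (p / (1 - p)) ^ (k - ones x) else 0) +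
      (if y = x then 1 - (p / (1 - p)) ^ (k - ones x) else 0)
  else if y = x then 1 else 0

/-- The output distribution of the per-coordinate planting process with parameters `k`, `p`:
first sample `k` i.i.d. `p`-biased bits, then apply the flipping step. -/
noncomputable def plantPMF (k : ℕ) (p : ℝ) (y : Fin k → Bool) : ℝ :=
  ∑ x : Fin k → Bool, (∏ i : Fin k, bern p (x i)) * plantTrans k p x y

lemma flipLast_flipLast {k : ℕ} (x : Fin k → Bool) : flipLast (flipLast x) = x := by
  funext i; simp only [flipLast]; split <;> simp

lemma flipLast_ne {k : ℕ} (hk : 1 ≤ k) (x : Fin k → Bool) : flipLast x ≠ x := by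
  intro h
  have := congrFun h ⟨k-1, by omega⟩
  simp [flipLast] at this

lemma prod_bern {k : ℕ} (p : ℝ) (x : Fin k → Bool) :
    (∏ i : Fin k, bern p (x i)) = p ^ ones x * (1-p) ^ (k - ones x) := by
  rw [← Finset.prod_filter_mul_prod_filter_not Finset.univ (fun i => x i = true)]
  congr 1
  · rw [Finset.prod_eq_pow_card (b := p)]
    · rfl
    · intro i hi
      simp only [Finset.mem_filter] at hi
      simp [bern, hi.2]
  · rw [Finset.prod_eq_pow_card (b := 1-p)]
    · congr 1
      have := Finset.card_filter_add_card_filter_not (s := (Finset.univ : Finset (Fin k))) (p := fun i => x i = true)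
      simp only [Finset.card_univ, Fintype.card_fin, ones] at this ⊢
      omega
    · intro i hi
      simp only [Finset.mem_filter] at hi
      simp [bern, hi.2]

lemma ones_le {k : ℕ} (x : Fin k → Bool) : ones x ≤ k := by
  have := Finset.card_filter_le (Finset.univ : Finset (Fin k)) (fun i => x i = true)
  simpa [ones] using this

lemma ones_eq_sum {k : ℕ} (x : Fin k → Bool) :
    ones x = ∑ i : Fin k, (if x i = true then 1 else 0) := by
  rw [ones, Finset.card_filter]

lemma ones_flipLast {k : ℕ} (hk : 1 ≤ k) (y : Fin k → Bool) :
    ones (flipLast y) = if y ⟨k-1, by omega⟩ = true then ones y - 1 else ones y + 1 := by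
  set j : Fin k := ⟨k-1, by omega⟩ with hj
  have hagree : ∀ i ∈ Finset.univ.erase j,
      (if flipLast y i = true then (1:ℕ) else 0) = (if y i = true then 1 else 0) := by
    intro i hi
    have hij : i ≠ j := (Finset.mem_erase.mp hi).1
    have : (i:ℕ) ≠ k - 1 := fun h => hij (Fin.ext (by simp [hj, h]))
    simp [flipLast, this]
  have key : ∀ z : Fin k → Bool,
      ones z = (∑ i ∈ Finset.univ.erase j, if z i = true then (1:ℕ) else 0)
        + (if z j = true then 1 else 0) := by
    intro z
    rw [ones_eq_sum, ← Finset.sum_erase_add Finset.univ _ (Finset.mem_univ j)]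
  rw [key (flipLast y), key y, Finset.sum_congr rfl hagree]
  have hfj : flipLast y j = !(y j) := by simp [flipLast, hj]
  cases hyj : y j <;> simp [hfj, hyj]

lemma ones_perm {k : ℕ} (π : Equiv.Perm (Fin k)) (x : Fin k → Bool) :
    ones (fun i => x (π i)) = ones x := by
  simp only [ones]
  rw [show (Finset.univ.filter fun i => x (π i) = true)
      = (Finset.univ.filter fun i => x i = true).map π.symm.toEmbedding by
    ext i; simp]
  simp


lemma plantPMF_eq (k : ℕ) (hk : 1 ≤ k) (p : ℝ) (hp0 : 0 < p) (hp1 : p < 1)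
    (y : Fin k → Bool) :
    plantPMF k p y =
      if Even (k - ones y) then p ^ ones y * (1-p) ^ (k - ones y) - p ^ k
      else p ^ ones y * (1-p) ^ (k - ones y) + p ^ k := by
  have h1p : (0:ℝ) < 1 - p := by linarith
  have hne : flipLast y ≠ y := flipLast_ne hk y
  rw [plantPMF, Finset.sum_eq_add_of_mem y (flipLast y) (Finset.mem_univ _) (Finset.mem_univ _)
    (Ne.symm hne) ?hrest]
  case hrest =>
    intro z _ hz
    obtain ⟨hz1, hz2⟩ := hz
    have h1 : y ≠ z := fun h => hz1 h.symm
    have h2 : y ≠ flipLast z := by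
      intro h
      apply hz2
      rw [h, flipLast_flipLast]
    rw [plantTrans]
    split_ifs with h
    · simp [h1, h2]
    · simp [h1]
  -- compute the two transition values
  have hT1 : plantTrans k p y y =
      if Even (k - ones y) then 1 - (p / (1 - p)) ^ (k - ones y) else 1 := by
    rw [plantTrans]
    by_cases h : Even (k - ones y) <;> simp [h, Ne.symm hne]
  have hT2 : plantTrans k p (flipLast y) y =
      if Even (k - ones (flipLast y)) then (p / (1 - p)) ^ (k - ones (flipLast y)) else 0 := by
    rw [plantTrans]
    by_cases h : Even (k - ones (flipLast y)) <;>
      simp [h, flipLast_flipLast, (Ne.symm hne : y ≠ flipLast y)]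
  rw [hT1, hT2, prod_bern, prod_bern]
  set j : Fin k := ⟨k-1, by omega⟩ with hj
  have hofl : ones (flipLast y) = if y j = true then ones y - 1 else ones y + 1 :=
    ones_flipLast hk y
  have hmle : ones y ≤ k := ones_le y
  have hr : ∀ a b : ℕ, a + b = k → p ^ a * (1-p) ^ b * (p / (1-p)) ^ b = p ^ k := by
    intro a b hab
    subst hab
    have h0 : (1-p)^b ≠ 0 := pow_ne_zero _ (ne_of_gt h1p)
    rw [div_pow, pow_add]
    field_simp
  cases hyj : y j with
  | true =>
    have hm1 : 1 ≤ ones y := by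
      have hmem : j ∈ Finset.univ.filter fun i => y i = true := by simp [hyj]
      have := Finset.card_pos.mpr ⟨j, hmem⟩
      simpa [ones] using this
    rw [hofl]
    simp only [hyj, if_true]
    have he : k - (ones y - 1) = (k - ones y) + 1 := by omega
    rw [he]
    have hpar : Even ((k - ones y) + 1) ↔ ¬ Even (k - ones y) := Nat.even_add_one
    by_cases h : Even (k - ones y)
    · simp only [if_pos h, if_neg (fun hh => (hpar.mp hh) h)]
      have hc := hr (ones y) (k - ones y) (by omega)
      linear_combination -hc
    · simp only [if_neg h, if_pos (hpar.mpr h)]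
      have hc := hr (ones y - 1) (k - ones y + 1) (by omega)
      linear_combination hc
  | false =>
    have hm2 : ones y ≤ k - 1 := by
      have hsub : (Finset.univ.filter fun i => y i = true) ⊆ Finset.univ.erase j := by
        intro i hi
        simp only [Finset.mem_filter] at hi
        refine Finset.mem_erase.mpr ⟨?_, Finset.mem_univ _⟩
        intro h; rw [h, hyj] at hi; exact Bool.false_ne_true hi.2
      have := Finset.card_le_card hsub
      simpa [ones, Finset.card_erase_of_mem] using this
    rw [hofl]
    simp only [hyj, Bool.false_eq_true, if_false]
    have hn1 : 1 ≤ k - ones y := by omega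
    have he : k - (ones y + 1) = (k - ones y) - 1 := by omega
    rw [he]
    have hpar : Even ((k - ones y) - 1) ↔ ¬ Even (k - ones y) := by
      rw [Nat.even_sub hn1]
      simp
    by_cases h : Even (k - ones y)
    · simp only [if_pos h, if_neg (fun hh => (hpar.mp hh) h)]
      have hc := hr (ones y) (k - ones y) (by omega)
      linear_combination -hc
    · simp only [if_neg h, if_pos (hpar.mpr h)]
      have hc := hr (ones y + 1) (k - ones y - 1) (by omega)
      linear_combination hc


/-- The output distribution of the per-coordinate planting process is
exchangeable: for every permutation `π` of the `k` positions and every `x ∈ {0,1}^k`, the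
probability of the output being `x` equals the probability of it being
`(x_{π(1)},…,x_{π(k)})`, despite the process only ever modifying the last bit. -/
theorem stmt7 (k : ℕ) (hk : 2 ≤ k) (p : ℝ) (hp0 : 0 < p) (hp2 : p ≤ 1 / 2)
    (π : Equiv.Perm (Fin k)) (x : Fin k → Bool) :
    plantPMF k p x = plantPMF k p (fun i => x (π i)) := by
  have hk1 : 1 ≤ k := by omega
  have hp1 : p < 1 := by linarith
  rw [plantPMF_eq k hk1 p hp0 hp1, plantPMF_eq k hk1 p hp0 hp1, ones_perm]
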